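/- (Convergence rate of the Lax-Friedrichs method.) Assume H is ℓ¹-Lipschitz in p with constant L, Lipschitz in u with some constant L_u, and nondecreasing in u; assume θ > 0 and β ≥ L/2. Let U be a solution of the Lax-Friedrichs scheme, let u : ℝ^d → ℝ, write û for the grid function û_α = u(x_α), and suppose that u(x_α) = g(x_α) at every boundary index α and that for constants K ≥ 0 and r > 0 the truncation bound |Ĥ_LF[û]_α| ≤ K·h_max^r holds at every interior index α. Then max over grid indices α of |u(x_α) − U_α| ≤ (2K/θ)·h_max^r. -/

import Mathlib

open Finset

/-- `α` is an interior index: `0 < α i < J i` for all `i`. -/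
def isInterior {d : ℕ} (J : Fin d → ℤ) (α : Fin d → ℤ) : Prop :=
  ∀ i, 0 < α i ∧ α i < J i

/-- `α` is a grid index: `0 ≤ α i ≤ J i` for all `i`. -/
def isGrid {d : ℕ} (J : Fin d → ℤ) (α : Fin d → ℤ) : Prop :=
  ∀ i, 0 ≤ α i ∧ α i ≤ J i

/-- `α` is a boundary index: a grid index with `α i ∈ {0, J i}` for some `i`. -/
def isBoundary {d : ℕ} (J : Fin d → ℤ) (α : Fin d → ℤ) : Prop :=
  isGrid J α ∧ ∃ i, α i = 0 ∨ α i = J i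

instance {d : ℕ} (J α : Fin d → ℤ) : Decidable (isInterior J α) :=
  inferInstanceAs (Decidable (∀ i, 0 < α i ∧ α i < J i))

instance {d : ℕ} (J α : Fin d → ℤ) : Decidable (isGrid J α) :=
  inferInstanceAs (Decidable (∀ i, 0 ≤ α i ∧ α i ≤ J i))

/-- The grid node `x_α = a + (α₁h₁, …, α_dh_d)`. -/
noncomputable def xpt {d : ℕ} (a h : Fin d → ℝ) (α : Fin d → ℤ) : Fin d → ℝ :=
  fun i => a i + (α i : ℝ) * h i

/-- Second central difference `δᵢ² U_α = (U_{α+eᵢ} − 2U_α + U_{α−eᵢ})/hᵢ²`. -/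
noncomputable def delta2 {d : ℕ} (h : Fin d → ℝ) (U : (Fin d → ℤ) → ℝ) (i : Fin d)
    (α : Fin d → ℤ) : ℝ :=
  (U (α + Pi.single i 1) - 2 * U α + U (α - Pi.single i 1)) / (h i) ^ 2

/-- Central discrete gradient `∇_h U_α`. -/
noncomputable def gradh {d : ℕ} (h : Fin d → ℝ) (U : (Fin d → ℤ) → ℝ) (α : Fin d → ℤ) :
    Fin d → ℝ :=
  fun i => (U (α + Pi.single i 1) - U (α - Pi.single i 1)) / (2 * h i)

/-- Lax-Friedrichs operator
`Ĥ_LF[U]_α = −β Σᵢ hᵢ δᵢ² U_α + H(∇_h U_α, U_α, x_α) + θ U_α`. -/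
noncomputable def HLF {d : ℕ} (h : Fin d → ℝ) (H : (Fin d → ℝ) → ℝ → (Fin d → ℝ) → ℝ)
    (θ β : ℝ) (a : Fin d → ℝ) (U : (Fin d → ℤ) → ℝ) (α : Fin d → ℤ) : ℝ :=
  -β * (∑ i, h i * delta2 h U i α) + H (gradh h U α) (U α) (xpt a h α) + θ * U α

/-- Per-coordinate numeric inequality used in the maximum principle. -/
lemma lf_term_ineq (L β hi vp vm v0 up um u0 : ℝ) (hip : 0 < hi) (hL : 0 ≤ L)
    (hβ : L / 2 ≤ β) (h1 : vp - up ≤ v0 - u0) (h2 : vm - um ≤ v0 - u0) :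
    L * |(vp - vm) / (2 * hi) - (up - um) / (2 * hi)| ≤
      β * (hi * ((up - 2 * u0 + um) / hi ^ 2) - hi * ((vp - 2 * v0 + vm) / hi ^ 2)) := by
  set M := v0 - u0 with hM
  set A := vp - up with hA
  set B := vm - um with hB
  have hD : (vp - vm) / (2 * hi) - (up - um) / (2 * hi) = (A - B) / (2 * hi) := by
    rw [hA, hB]; ring
  have hS : hi * ((up - 2 * u0 + um) / hi ^ 2) - hi * ((vp - 2 * v0 + vm) / hi ^ 2)
      = ((M - A) + (M - B)) / hi := by
    rw [hM, hA, hB]; field_simp; ring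
  rw [hD, hS, abs_div, abs_of_pos (by linarith : (0:ℝ) < 2 * hi)]
  have habs : |A - B| ≤ (M - A) + (M - B) := abs_le.mpr ⟨by linarith, by linarith⟩
  have hSnn : 0 ≤ (M - A) + (M - B) := by linarith
  rw [mul_div_assoc', mul_div_assoc', div_le_div_iff₀ (by linarith) hip]
  have hLS : L * |A - B| ≤ L * ((M - A) + (M - B)) :=
    mul_le_mul_of_nonneg_left habs hL
  nlinarith [mul_le_mul_of_nonneg_right hLS hip.le,
    mul_nonneg (mul_nonneg (by linarith : (0:ℝ) ≤ 2 * β - L) hSnn) hip.le]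

/-- Key monotonicity estimate: at an interior point where `V - U` attains a nonnegative
local maximum (w.r.t. its `2d` neighbors), `θ (V-U) ≤ HLF[V] - HLF[U]`. -/
lemma lf_key {d : ℕ}
    (h : Fin d → ℝ) (hh : ∀ i, 0 < h i) (a : Fin d → ℝ)
    (H : (Fin d → ℝ) → ℝ → (Fin d → ℝ) → ℝ)
    (θ β L : ℝ) (hL : 0 ≤ L)
    (hLip : ∀ (p q : Fin d → ℝ) (v : ℝ) (x : Fin d → ℝ),
      |H p v x - H q v x| ≤ L * ∑ i, |p i - q i|)
    (hmono : ∀ (p : Fin d → ℝ) (x : Fin d → ℝ), Monotone fun v => H p v x)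
    (hβ : L / 2 ≤ β)
    (V U : (Fin d → ℤ) → ℝ) (α : Fin d → ℤ)
    (hmaxp : ∀ i, V (α + Pi.single i 1) - U (α + Pi.single i 1) ≤ V α - U α)
    (hmaxm : ∀ i, V (α - Pi.single i 1) - U (α - Pi.single i 1) ≤ V α - U α)
    (hM : 0 ≤ V α - U α) :
    θ * (V α - U α) ≤ HLF h H θ β a V α - HLF h H θ β a U α := by
  have sum_ineq : L * ∑ i, |gradh h V α i - gradh h U α i| ≤
      β * ((∑ i, h i * delta2 h U i α) - ∑ i, h i * delta2 h V i α) := by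
    rw [← Finset.sum_sub_distrib, Finset.mul_sum, Finset.mul_sum]
    apply Finset.sum_le_sum
    intro i _
    simp only [gradh, delta2]
    exact lf_term_ineq L β (h i) _ _ _ _ _ _ (hh i) hL hβ (hmaxp i) (hmaxm i)
  have h1 : -(L * ∑ i, |gradh h V α i - gradh h U α i|) ≤
      H (gradh h V α) (V α) (xpt a h α) - H (gradh h U α) (V α) (xpt a h α) := by
    have hp := hLip (gradh h V α) (gradh h U α) (V α) (xpt a h α)
    have hn := neg_abs_le (H (gradh h V α) (V α) (xpt a h α) -
      H (gradh h U α) (V α) (xpt a h α))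
    linarith
  have h2 : H (gradh h U α) (U α) (xpt a h α) ≤ H (gradh h U α) (V α) (xpt a h α) :=
    hmono _ _ (by linarith)
  simp only [HLF]
  linarith

/-- Upper bound via the discrete maximum principle. -/
lemma lf_upper {d : ℕ} (J : Fin d → ℤ) (hJ : ∀ i, 2 ≤ J i)
    (h : Fin d → ℝ) (hh : ∀ i, 0 < h i) (a : Fin d → ℝ)
    (H : (Fin d → ℝ) → ℝ → (Fin d → ℝ) → ℝ)
    (θ : ℝ) (hθ : 0 < θ) (β L : ℝ) (hL : 0 ≤ L)
    (hLip : ∀ (p q : Fin d → ℝ) (v : ℝ) (x : Fin d → ℝ),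
      |H p v x - H q v x| ≤ L * ∑ i, |p i - q i|)
    (hmono : ∀ (p : Fin d → ℝ) (x : Fin d → ℝ), Monotone fun v => H p v x)
    (hβ : L / 2 ≤ β)
    (V U : (Fin d → ℤ) → ℝ)
    (hbd : ∀ α, isBoundary J α → V α = U α)
    (C : ℝ) (hC : 0 ≤ C)
    (hE : ∀ α, isInterior J α → HLF h H θ β a V α - HLF h H θ β a U α ≤ C) :
    ∀ α, isGrid J α → V α - U α ≤ C / θ := by
  classical
  set S : Finset (Fin d → ℤ) := Fintype.piFinset (fun i => Finset.Icc 0 (J i)) with hS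
  have hmem : ∀ α, α ∈ S ↔ isGrid J α := by
    intro α; simp [hS, Fintype.mem_piFinset, isGrid, Finset.mem_Icc]
  have hne : S.Nonempty := ⟨0, (hmem 0).mpr (fun i => by
    have := hJ i; constructor <;> simp <;> omega)⟩
  obtain ⟨α₀, hα₀S, hmaxα₀⟩ := S.exists_max_image (fun α => V α - U α) hne
  have hα₀g : isGrid J α₀ := (hmem _).mp hα₀S
  have hbound : V α₀ - U α₀ ≤ C / θ := by
    by_cases hb : ∃ i, α₀ i = 0 ∨ α₀ i = J i
    · rw [hbd α₀ ⟨hα₀g, hb⟩, sub_self]; positivity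
    · push_neg at hb
      have hint : isInterior J α₀ := by
        intro i; have h1 := hα₀g i; have h2 := hb i; omega
      by_cases hM : 0 ≤ V α₀ - U α₀
      · have hnbp : ∀ i, V (α₀ + Pi.single i 1) - U (α₀ + Pi.single i 1) ≤ V α₀ - U α₀ := by
          intro i; apply hmaxα₀; rw [hmem]; intro j
          have h1 := hint j
          by_cases hji : j = i
          · subst hji; simp only [Pi.add_apply, Pi.single_eq_same]; omega
          · simp only [Pi.add_apply, Pi.single_eq_of_ne hji]; omega
        have hnbm : ∀ i, V (α₀ - Pi.single i 1) - U (α₀ - Pi.single i 1) ≤ V α₀ - U α₀ := by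
          intro i; apply hmaxα₀; rw [hmem]; intro j
          have h1 := hint j
          by_cases hji : j = i
          · subst hji; simp only [Pi.sub_apply, Pi.single_eq_same]; omega
          · simp only [Pi.sub_apply, Pi.single_eq_of_ne hji]; omega
        have hk := lf_key h hh a H θ β L hL hLip hmono hβ V U α₀ hnbp hnbm hM
        have hE' := hE α₀ hint
        rw [le_div_iff₀ hθ]
        nlinarith
      · push_neg at hM
        have : 0 ≤ C / θ := by positivity
        linarith
  intro α hα
  exact le_trans (hmaxα₀ α ((hmem α).mpr hα)) hbound

/-- Convergence rate of the Lax-Friedrichs method: if `U` solves the scheme,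
`u` matches `g` at boundary nodes, and the truncation bound
`|Ĥ_LF[û]_α| ≤ K h_max^r` holds at interior indices, then
`max_α |u(x_α) − U_α| ≤ (2K/θ) h_max^r`. -/
theorem lax_friedrichs_convergence_rate {d : ℕ} (hd : 0 < d)
    (J : Fin d → ℤ) (hJ : ∀ i, 2 ≤ J i)
    (h : Fin d → ℝ) (hh : ∀ i, 0 < h i) (a : Fin d → ℝ)
    (hmax : ℝ) (hhmax : hmax = Finset.univ.sup' ⟨⟨0, hd⟩, Finset.mem_univ _⟩ h)
    (H : (Fin d → ℝ) → ℝ → (Fin d → ℝ) → ℝ)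
    (θ : ℝ) (hθ : 0 < θ) (β : ℝ) (g : (Fin d → ℝ) → ℝ)
    (L Lu : ℝ)
    (hLip : ∀ (p q : Fin d → ℝ) (v : ℝ) (x : Fin d → ℝ),
      |H p v x - H q v x| ≤ L * ∑ i, |p i - q i|)
    (hLipu : ∀ (p : Fin d → ℝ) (v w : ℝ) (x : Fin d → ℝ),
      |H p v x - H p w x| ≤ Lu * |v - w|)
    (hmono : ∀ (p : Fin d → ℝ) (x : Fin d → ℝ), Monotone fun v => H p v x)
    (hβ : L / 2 ≤ β)
    (U : (Fin d → ℤ) → ℝ)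
    (hU1 : ∀ α, isInterior J α → HLF h H θ β a U α = 0)
    (hU2 : ∀ α, isBoundary J α → U α = g (xpt a h α))
    (u : (Fin d → ℝ) → ℝ)
    (hbc : ∀ α, isBoundary J α → u (xpt a h α) = g (xpt a h α))
    (K r : ℝ) (hK : 0 ≤ K) (hr : 0 < r)
    (htrunc : ∀ α, isInterior J α →
      |HLF h H θ β a (fun α' => u (xpt a h α')) α| ≤ K * hmax ^ r) :
    ∀ α, isGrid J α → |u (xpt a h α) - U α| ≤ 2 * K / θ * hmax ^ r := by
  have hL : 0 ≤ L := by
    have h0 := hLip (fun _ => 1) (fun _ => 0) 0 (fun _ => 0)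
    have hsum : (∑ i : Fin d, |((fun _ => (1:ℝ)) i) - ((fun _ => (0:ℝ)) i)|) = d := by simp
    rw [hsum] at h0
    have habs := abs_nonneg (H (fun _ => 1) 0 (fun _ => 0) - H (fun _ => 0) 0 (fun _ => 0))
    have hd' : (0:ℝ) < d := by exact_mod_cast hd
    nlinarith
  have hm0 : 0 < hmax := by
    rw [hhmax]
    exact lt_of_lt_of_le (hh ⟨0, hd⟩) (Finset.le_sup' h (Finset.mem_univ ⟨0, hd⟩))
  have hpow : 0 ≤ hmax ^ r := by positivity
  set C := K * hmax ^ r with hCdef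
  have hC : 0 ≤ C := mul_nonneg hK hpow
  have hup := lf_upper J hJ h hh a H θ hθ β L hL hLip hmono hβ
    (fun α' => u (xpt a h α')) U
    (fun α hb => by rw [hbc α hb, hU2 α hb]) C hC
    (fun α hi => by
      rw [hU1 α hi, sub_zero]
      exact le_trans (le_abs_self _) (htrunc α hi))
  have hdn := lf_upper J hJ h hh a H θ hθ β L hL hLip hmono hβ
    U (fun α' => u (xpt a h α'))
    (fun α hb => by rw [hbc α hb, hU2 α hb]) C hC
    (fun α hi => by
      rw [hU1 α hi, zero_sub]
      exact le_trans (neg_le_abs _) (htrunc α hi))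
  intro α hα
  have h1 := hup α hα
  have h2 := hdn α hα
  have hCθ : 0 ≤ C / θ := by positivity
  have heq : 2 * K / θ * hmax ^ r = 2 * (C / θ) := by rw [hCdef]; ring
  rw [heq]
  exact abs_le.mpr ⟨by linarith, by linarith⟩
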